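/- For a rooted tree T with n ≥ 2 nodes, the upper bounds c(T,k) = binom(n,k) hold simultaneously for all k = 1,...,n−2 if and only if T has precisely one leaf (i.e., T is a path from the root). -/

import Mathlib

open Finset

/-- A rooted tree on node set `Fin n`, given by a parent function.
The root is its own parent, and iterating the parent function from any
node eventually reaches the root. -/
structure RTree (n : ℕ) where
  root : Fin n
  parent : Fin n → Fin n
  parent_root : parent root = root
  reaches_root : ∀ v, ∃ k, parent^[k] v = root

namespace RTree

variable {n : ℕ}

/-- `y` is an ancestor of `v` (possibly `y = v`): `y` lies on the
root-to-`v` path. -/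
def Ancestor (T : RTree n) (y v : Fin n) : Prop :=
  ∃ k, T.parent^[k] v = y

/-- `u` is a child of `v`. -/
def IsChild (T : RTree n) (u v : Fin n) : Prop :=
  u ≠ T.root ∧ T.parent u = v

/-- A node is internal if it has at least one child. -/
def IsInternal (T : RTree n) (v : Fin n) : Prop :=
  ∃ u, T.IsChild u v

/-- A leaf is a node with no children. -/
def IsLeaf (T : RTree n) (v : Fin n) : Prop :=
  ¬ T.IsInternal v

open scoped Classical in
noncomputable def children (T : RTree n) (v : Fin n) : Finset (Fin n) :=
  Finset.univ.filter (fun u => T.IsChild u v)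

open scoped Classical in
noncomputable def leaves (T : RTree n) : Finset (Fin n) :=
  Finset.univ.filter (fun v => T.IsLeaf v)

/-- A transversal is a set of nodes meeting every root-to-leaf path. -/
def IsTransversal (T : RTree n) (S : Finset (Fin n)) : Prop :=
  ∀ ℓ, T.IsLeaf ℓ → ∃ v ∈ S, T.Ancestor v ℓ

open scoped Classical in
/-- `c T k` is the number of transversals of size `k` in `T`. -/
noncomputable def c (T : RTree n) (k : ℕ) : ℕ :=
  ((Finset.univ.powersetCard k).filter (fun S => T.IsTransversal S)).card

/-- A caterpillar: the internal nodes form a chain under the ancestor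
relation (equivalently, removing all leaves yields a rooted tree with
precisely one leaf). -/
def IsCaterpillar (T : RTree n) : Prop :=
  ∀ v w, T.IsInternal v → T.IsInternal w → T.Ancestor v w ∨ T.Ancestor w v

/-- A full caterpillar of degree `d`: a caterpillar in which every internal
node, except possibly the lowest one, has precisely `d` children (and no node
has more than `d` children). -/
def IsFullCaterpillar (T : RTree n) (d : ℕ) : Prop :=
  T.IsCaterpillar ∧ (∀ v, (T.children v).card ≤ d) ∧
    ∀ v, (∃ w, T.IsInternal w ∧ T.IsChild w v) → (T.children v).card = d

/-- Isomorphism of rooted trees on `Fin n`. -/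
def Isomorphic (T T' : RTree n) : Prop :=
  ∃ e : Fin n ≃ Fin n, e T.root = T'.root ∧ ∀ v, e (T.parent v) = T'.parent (e v)

end RTree

open RTree

namespace RTree

variable {n : ℕ}

lemma root_internal (hn : 2 ≤ n) (T : RTree n) : T.IsInternal T.root := by
  obtain ⟨v, hv⟩ := Fintype.exists_ne_of_one_lt_card (by simp; omega) T.root
  have hex := T.reaches_root v
  set k0 := Nat.find hex with hk0
  have hspec : T.parent^[k0] v = T.root := Nat.find_spec hex
  have hk0pos : 0 < k0 := by
    rcases Nat.eq_zero_or_pos k0 with h | h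
    · rw [h] at hspec; simp at hspec; exact absurd hspec hv
    · exact h
  refine ⟨T.parent^[k0 - 1] v, ?_, ?_⟩
  · intro h
    exact Nat.find_min hex (Nat.sub_lt hk0pos one_pos) h
  · have : T.parent (T.parent^[k0 - 1] v) = T.parent^[k0] v := by
      rw [← Function.iterate_succ_apply' T.parent (k0 - 1) v, Nat.succ_eq_add_one,
        Nat.sub_add_cancel hk0pos]
    rw [this, hspec]

lemma leaf_ancestor_eq (hn : 2 ≤ n) (T : RTree n) {ℓ v : Fin n}
    (hℓ : T.IsLeaf ℓ) (h : T.Ancestor ℓ v) : v = ℓ := by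
  obtain ⟨k, hk⟩ := h
  cases k with
  | zero => exact hk
  | succ m =>
    exfalso
    rw [Function.iterate_succ_apply'] at hk
    by_cases hu : T.parent^[m] v = T.root
    · rw [hu, T.parent_root] at hk
      exact hℓ (hk ▸ T.root_internal hn)
    · exact hℓ ⟨T.parent^[m] v, hu, hk⟩

noncomputable def depth (T : RTree n) (v : Fin n) : ℕ :=
  Nat.find (T.reaches_root v)

lemma depth_lt_of_child (T : RTree n) {c u : Fin n} (h : T.IsChild c u) :
    T.depth u < T.depth c := by
  obtain ⟨hc, hp⟩ := h
  have hspec : T.parent^[T.depth c] c = T.root := Nat.find_spec (T.reaches_root c)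
  have hpos : 0 < T.depth c := by
    rcases Nat.eq_zero_or_pos (T.depth c) with h | h
    · rw [h] at hspec; simp at hspec; exact absurd hspec hc
    · exact h
  have : T.parent^[T.depth c - 1] u = T.root := by
    rw [← hp, ← Function.iterate_succ_apply T.parent (T.depth c - 1) c,
      Nat.succ_eq_add_one, Nat.sub_add_cancel hpos, hspec]
  have hle : T.depth u ≤ T.depth c - 1 := Nat.find_le this
  omega

lemma exists_leaf_descendant (T : RTree n) (v : Fin n) :
    ∃ ℓ, T.IsLeaf ℓ ∧ T.Ancestor v ℓ := by
  classical
  set s : Finset (Fin n) := Finset.univ.filter (fun u => T.Ancestor v u) with hs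
  have hne : s.Nonempty := ⟨v, by rw [hs, Finset.mem_filter]; exact ⟨Finset.mem_univ _, 0, rfl⟩⟩
  obtain ⟨ℓ, hℓs, hmax⟩ := s.exists_max_image T.depth hne
  refine ⟨ℓ, ?_, by simpa [hs] using hℓs⟩
  rintro ⟨c, hc⟩
  have hanc : T.Ancestor v ℓ := by simpa [hs] using hℓs
  obtain ⟨k, hk⟩ := hanc
  have hcs : c ∈ s := by
    simp only [hs, Finset.mem_filter, Finset.mem_univ, true_and]
    exact ⟨k + 1, by rw [Function.iterate_succ_apply, hc.2, hk]⟩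
  have := hmax c hcs
  have := T.depth_lt_of_child hc
  omega

lemma leaves_nonempty (T : RTree n) : T.leaves.Nonempty := by
  classical
  obtain ⟨ℓ, hℓ, _⟩ := T.exists_leaf_descendant T.root
  exact ⟨ℓ, by simp [leaves, hℓ]⟩

end RTree

theorem stmt4 (n : ℕ) (hn : 2 ≤ n) (T : RTree n) :
    (∀ k, 1 ≤ k → k ≤ n - 2 → T.c k = n.choose k) ↔ T.leaves.card = 1 := by
  classical
  constructor
  · intro hall
    obtain ⟨ℓ0, hℓ0⟩ := T.leaves_nonempty
    rcases Nat.lt_or_ge n 3 with h3 | h3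
    · -- n = 2
      have hn2 : n = 2 := by omega
      have hroot : T.root ∉ T.leaves := by
        simp only [leaves, Finset.mem_filter]
        rintro ⟨-, h⟩
        exact h (T.root_internal hn)
      have hsub : T.leaves ⊆ Finset.univ.erase T.root := by
        intro x hx
        rcases eq_or_ne x T.root with rfl | hne
        · exact absurd hx hroot
        · exact Finset.mem_erase.mpr ⟨hne, Finset.mem_univ x⟩
      have hle : T.leaves.card ≤ 1 := by
        have := Finset.card_le_card hsub
        rw [Finset.card_erase_of_mem (Finset.mem_univ _), Finset.card_univ,
          Fintype.card_fin] at this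
        omega
      have := Finset.card_pos.mpr ⟨ℓ0, hℓ0⟩
      omega
    · -- n ≥ 3
      by_contra hne1
      have hone : 1 < T.leaves.card := by
        have := Finset.card_pos.mpr ⟨ℓ0, hℓ0⟩
        omega
      obtain ⟨ℓ1, h1, ℓ2, h2, hneq⟩ := Finset.one_lt_card.mp hone
      have hl1 : T.IsLeaf ℓ1 := by simpa [leaves] using h1
      have hl2 : T.IsLeaf ℓ2 := by simpa [leaves] using h2
      have hc1 : T.c 1 = n.choose 1 := hall 1 le_rfl (by omega)
      have hfil : ((Finset.univ.powersetCard 1).filter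
          (fun S : Finset (Fin n) => T.IsTransversal S)) =
          (Finset.univ.powersetCard 1 : Finset (Finset (Fin n))) := by
        apply Finset.eq_of_subset_of_card_le (Finset.filter_subset _ _)
        have : ((Finset.univ.powersetCard 1).filter
            (fun S : Finset (Fin n) => T.IsTransversal S)).card = n.choose 1 := by
          rw [← hc1]; simp [RTree.c]
        rw [this, Finset.card_powersetCard, Finset.card_univ, Fintype.card_fin]
      have hmem : ({ℓ1} : Finset (Fin n)) ∈ (Finset.univ.powersetCard 1 :
          Finset (Finset (Fin n))) := by
        simp [Finset.mem_powersetCard]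
      rw [← hfil, Finset.mem_filter] at hmem
      obtain ⟨v, hv, hanc⟩ := hmem.2 ℓ2 hl2
      rw [Finset.mem_singleton] at hv
      subst hv
      exact hneq (T.leaf_ancestor_eq hn hl1 hanc).symm
  · intro hcard hk hk1 hk2
    obtain ⟨ℓ, hℓ⟩ := Finset.card_eq_one.mp hcard
    have huniq : ∀ x, T.IsLeaf x → x = ℓ := by
      intro x hx
      have : x ∈ T.leaves := by simp [leaves, hx]
      rw [hℓ, Finset.mem_singleton] at this
      exact this
    have hanc : ∀ v x, T.IsLeaf x → T.Ancestor v x := by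
      intro v x hx
      obtain ⟨ℓ', hℓ', hanc'⟩ := T.exists_leaf_descendant v
      rwa [(huniq ℓ' hℓ').trans (huniq x hx).symm] at hanc'
    have hfil : ((Finset.univ.powersetCard hk).filter
        (fun S : Finset (Fin n) => T.IsTransversal S)) =
        (Finset.univ.powersetCard hk : Finset (Finset (Fin n))) := by
      apply Finset.filter_true_of_mem
      intro S hS
      rw [Finset.mem_powersetCard] at hS
      obtain ⟨v, hv⟩ : S.Nonempty := Finset.card_pos.mp (by omega)
      intro x hx
      exact ⟨v, hv, hanc v x hx⟩
    have : T.c hk = ((Finset.univ.powersetCard hk :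
        Finset (Finset (Fin n)))).card := by
      simp only [RTree.c]
      congr 1
    rw [this, Finset.card_powersetCard, Finset.card_univ, Fintype.card_fin]
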